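/- Let F be a finite field of odd cardinality. Then there exists an injective group homomorphism from the quaternion group Q of order 8 into SL(2, F) which sends the unique central involution −1 ∈ Q to the matrix −𝟙 ∈ SL(2, F). -/

import Mathlib

open Matrix

/-- For a finite field `F` of odd cardinality, there is an injective group homomorphism from the
quaternion group `Q` of order `8` into `SL(2, F)` sending the unique central involution
`−1 ∈ Q` (the unique element of order 2) to the matrix `−𝟙`. -/
theorem stmt_16 (F : Type) [Field F] [Fintype F] (hq : Odd (Fintype.card F)) :
    ∃ f : QuaternionGroup 2 →* SpecialLinearGroup (Fin 2) F,
      Function.Injective f ∧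
      ∀ z : QuaternionGroup 2, orderOf z = 2 →
        ((f z : Matrix (Fin 2) (Fin 2) F)) = -1 := by
  classical
  -- the characteristic is an odd prime
  have hprime : (ringChar F).Prime := CharP.char_is_prime F (ringChar F)
  haveI : NeZero (ringChar F) := ⟨hprime.ne_zero⟩
  have hne2 : ringChar F ≠ 2 := by
    intro h
    obtain ⟨n, hpn, hcard⟩ := FiniteField.card F (ringChar F)
    rw [h] at hcard
    rw [hcard] at hq
    have hdvd : 2 ∣ 2 ^ (n : ℕ) := dvd_pow_self 2 n.pos.ne'
    rcases hq with ⟨k, hk⟩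
    omega
  have htwo : (1 : F) ≠ -1 := by
    intro h
    have h2 : (2 : F) = 0 := by linear_combination h
    have := (CharP.cast_eq_zero_iff F (ringChar F) 2).1 (by exact_mod_cast h2)
    exact hne2 ((Nat.prime_dvd_prime_iff_eq hprime Nat.prime_two).1 this)
  -- find α β with α² + β² = -1
  obtain ⟨a, b, hab⟩ := CharP.sq_add_sq F (ringChar F) (-1)
  set α : F := (a : F) with hα
  set β : F := (b : F) with hβ
  have hαβ : α ^ 2 + β ^ 2 = -1 := by rw [hab]; push_cast; ring
  -- the two generating matrices
  set A : Matrix (Fin 2) (Fin 2) F := !![0, -1; 1, 0] with hA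
  set B : Matrix (Fin 2) (Fin 2) F := !![α, β; β, -α] with hB
  have hdetA : A.det = 1 := by simp [hA, Matrix.det_fin_two_of]
  have hdetB : B.det = 1 := by
    rw [hB, Matrix.det_fin_two_of]; linear_combination -hαβ
  set I : SpecialLinearGroup (Fin 2) F := ⟨A, hdetA⟩ with hI
  set J : SpecialLinearGroup (Fin 2) F := ⟨B, hdetB⟩ with hJ
  -- matrix identities
  have hA2 : A * A = -1 := by
    ext i j
    fin_cases i <;> fin_cases j <;>
      simp [hA, Matrix.mul_apply, Fin.sum_univ_two]
  have hA3 : A ^ 3 = -A := by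
    rw [pow_succ, pow_two, hA2, neg_one_mul]
  have hBA : B * A = !![β, -α; -α, -β] := by
    ext i j
    fin_cases i <;> fin_cases j <;>
      simp [hA, hB, Matrix.mul_apply, Fin.sum_univ_two]
  have hI4 : I ^ 4 = 1 := by
    apply Subtype.ext
    show A ^ 4 = 1
    have h4 : A ^ 4 = (A * A) * (A * A) := by
      rw [show (4 : ℕ) = 2 + 2 from rfl, pow_add, pow_two]
    rw [h4, hA2]; simp
  have hJ2 : J * J = I * I := by
    apply Subtype.ext
    show B * B = A * A
    rw [hA2]
    ext i j
    fin_cases i <;> fin_cases j <;>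
      simp [hB, Matrix.mul_apply, Fin.sum_univ_two] <;>
      first
        | ring1
        | linear_combination hαβ
        | linear_combination -hαβ
        | linear_combination (2 : F) * hαβ
        | linear_combination (-2 : F) * hαβ
  have hIJI : (I * J) * I = J := by
    apply Subtype.ext
    show (A * B) * A = B
    ext i j
    fin_cases i <;> fin_cases j <;>
      simp [hA, hB, Matrix.mul_apply, Fin.sum_univ_two] <;> ring
  have hIJ : I * J = J * I⁻¹ := eq_mul_inv_of_mul_eq hIJI
  -- powers of I
  have hImod : ∀ k : ℕ, I ^ (k % 4) = I ^ k := by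
    intro k
    conv_rhs => rw [← Nat.div_add_mod k 4]
    rw [pow_add, pow_mul, hI4, one_pow, one_mul]
  set Ip : ZMod 4 → SpecialLinearGroup (Fin 2) F := fun i => I ^ i.val with hIp
  have hadd : ∀ i j : ZMod 4, Ip (i + j) = Ip i * Ip j := by
    intro i j
    simp only [hIp]
    rw [ZMod.val_add, hImod, pow_add]
  have hsub : ∀ i j : ZMod 4, Ip (j - i) = (Ip i)⁻¹ * Ip j := by
    intro i j
    have h := hadd (j - i) i
    rw [sub_add_cancel] at h
    have h2 : Ip (j - i) = Ip j * (Ip i)⁻¹ := eq_mul_inv_of_mul_eq h.symm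
    rw [h2]
    simp only [hIp]
    exact ((Commute.refl I).pow_pow _ _).inv_right.eq
  have hJcomm : ∀ k : ℕ, I ^ k * J = J * (I ^ k)⁻¹ := by
    intro k
    induction k with
    | zero => simp
    | succ n ih =>
        rw [pow_succ, _root_.mul_inv_rev, mul_assoc, hIJ, ← mul_assoc, ih,
          mul_assoc]
        congr 1
        exact (((Commute.refl I).pow_left n).inv_inv).eq
  have hJcomm' : ∀ i : ZMod 4, Ip i * J = J * (Ip i)⁻¹ := by
    intro i; simp only [hIp]; exact hJcomm i.val
  have e2 : Ip (2 : ZMod 4) = I * I := by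
    simp only [hIp]
    rw [show ((2 : ZMod 4)).val = 2 by decide, pow_two]
  -- the homomorphism
  let fn : QuaternionGroup 2 → SpecialLinearGroup (Fin 2) F := fun z =>
    match z with
    | .a i => Ip i
    | .xa i => J * Ip i
  have hmul : ∀ x y : QuaternionGroup 2, fn (x * y) = fn x * fn y := by
    rintro (i | i) (j | j)
    · show Ip (i + j) = Ip i * Ip j
      exact hadd i j
    · show J * Ip (j - i) = Ip i * (J * Ip j)
      rw [hsub i j, ← mul_assoc, ← hJcomm' i, mul_assoc]
    · show J * Ip (i + j) = (J * Ip i) * Ip j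
      rw [hadd, mul_assoc]
    · show Ip ((2 : ZMod 4) + j - i) = (J * Ip i) * (J * Ip j)
      have e1 : (2 : ZMod 4) + j - i = (2 : ZMod 4) + (j - i) := by ring
      rw [e1, hadd, e2, hsub]
      conv_rhs =>
        rw [mul_assoc, ← mul_assoc (Ip i), hJcomm' i, mul_assoc,
          ← mul_assoc J J, hJ2]
  let f : QuaternionGroup 2 →* SpecialLinearGroup (Fin 2) F :=
    { toFun := fn
      map_one' := by show Ip 0 = 1; simp [hIp, ZMod.val_zero]
      map_mul' := hmul }
  refine ⟨f, ?_, ?_⟩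
  · rw [injective_iff_map_eq_one]
    rintro (i | i) h
    · -- h : Ip i = 1
      have h' : A ^ (i.val) = 1 := by
        have h2 := congrArg (fun M : SpecialLinearGroup (Fin 2) F =>
          (M : Matrix (Fin 2) (Fin 2) F)) h
        simpa [f, fn, hIp, SpecialLinearGroup.coe_pow] using h2
      have hvlt : i.val < 4 := ZMod.val_lt i
      have hcases : i.val = 0 ∨ i.val = 1 ∨ i.val = 2 ∨ i.val = 3 := by omega
      rcases hcases with hv | hv | hv | hv
      · rw [(ZMod.val_eq_zero i).1 hv]
        exact (QuaternionGroup.one_def).symm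
      · exfalso
        rw [hv, pow_one] at h'
        have := Matrix.ext_iff.2 h' 0 0
        simp [hA] at this
      · exfalso
        rw [hv, pow_two, hA2] at h'
        have := Matrix.ext_iff.2 h' 0 0
        simp at this
        exact htwo (by linear_combination -this)
      · exfalso
        rw [hv, hA3] at h'
        have := Matrix.ext_iff.2 h' 1 0
        simp [hA] at this
    · -- h : J * Ip i = 1, i.e. B * A^i.val = 1
      exfalso
      have h' : B * A ^ (i.val) = 1 := by
        have h2 := congrArg (fun M : SpecialLinearGroup (Fin 2) F =>
          (M : Matrix (Fin 2) (Fin 2) F)) h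
        simpa [f, fn, hIp, SpecialLinearGroup.coe_pow, SpecialLinearGroup.coe_mul]
          using h2
      have hvlt : i.val < 4 := ZMod.val_lt i
      have hcases : i.val = 0 ∨ i.val = 1 ∨ i.val = 2 ∨ i.val = 3 := by omega
      rcases hcases with hv | hv | hv | hv <;>
        [ rw [hv, pow_zero, mul_one] at h';
          rw [hv, pow_one, hBA] at h';
          rw [hv, pow_two, hA2, mul_neg_one] at h';
          rw [hv, hA3, mul_neg, hBA] at h'] <;>
      · have e00 := Matrix.ext_iff.2 h' 0 0
        have e11 := Matrix.ext_iff.2 h' 1 1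
        simp [hB] at e00 e11
        apply htwo
        first
          | linear_combination e00 + e11
          | linear_combination -e00 - e11
          | linear_combination e00 - e11
          | linear_combination e11 - e00
  · intro z hz
    have hz1 : z ≠ 1 := by
      intro h; rw [h, orderOf_one] at hz; exact absurd hz (by norm_num)
    have hzsq : z ^ 2 = 1 := by
      have h2 := pow_orderOf_eq_one z
      rwa [hz] at h2
    rcases z with i | i
    · have haa : QuaternionGroup.a (i + i) = QuaternionGroup.a 0 := by
        rw [← QuaternionGroup.a_mul_a, ← pow_two, hzsq, QuaternionGroup.one_def]
      have hii : i + i = 0 := by injection haa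
      have hi2 : i = 2 := by
        fin_cases i
        · exfalso; exact hz1 (QuaternionGroup.one_def).symm
        · exact absurd hii (by decide)
        · rfl
        · exact absurd hii (by decide)
      subst hi2
      show ((Ip 2 : SpecialLinearGroup (Fin 2) F) : Matrix (Fin 2) (Fin 2) F) = -1
      rw [e2]
      exact hA2
    · rw [QuaternionGroup.orderOf_xa] at hz
      exact absurd hz (by norm_num)
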